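/- arXiv:2401.09998 — 4 statements merged into one kernel-verified Lean document; each statement's English description precedes it below -/
import Mathlib

section
/- For every integer n ≥ 3 and every y with 0 < y ≤ 1, one has y < n · ∫_y^{y√(n/(n-2))} ((n+y²)/(n+x²))^{(n+1)/2} dx. -/
open Real MeasureTheory intervalIntegral

set_option maxHeartbeats 1000000 in
/-- For every integer `n ≥ 3` and every `y` with `0 < y ≤ 1`,
`y < n · ∫_y^{y√(n/(n-2))} ((n+y²)/(n+x²))^{(n+1)/2} dx`. -/
theorem student_t_integral_inequality (n : ℕ) (hn : 3 ≤ n) (y : ℝ) (hy0 : 0 < y)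
    (hy1 : y ≤ 1) :
    y < (n : ℝ) * ∫ x in y..(y * Real.sqrt ((n : ℝ) / ((n : ℝ) - 2))),
      (((n : ℝ) + y ^ 2) / ((n : ℝ) + x ^ 2)) ^ (((n : ℝ) + 1) / 2) := by
  have hn3 : (3:ℝ) ≤ (n:ℝ) := by exact_mod_cast hn
  have hn2 : (0:ℝ) < (n:ℝ) - 2 := by linarith
  set s : ℝ := Real.sqrt ((n : ℝ) / ((n : ℝ) - 2)) with hsdef
  have hs0 : 0 ≤ s := Real.sqrt_nonneg _
  have hs2 : s ^ 2 = (n:ℝ) / ((n:ℝ) - 2) := Real.sq_sqrt (by positivity)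
  have hseq : s ^ 2 * ((n:ℝ) - 2) = (n:ℝ) := by
    rw [hs2]; field_simp
  have hsq1 : 1 < s ^ 2 := by
    rw [hs2, lt_div_iff₀ hn2]; linarith
  have hs1 : 1 < s := by nlinarith [hsq1, hs0]
  have hs3 : s ^ 2 ≤ 3 := by
    rw [hs2, div_le_iff₀ hn2]; linarith
  have hab : y ≤ y * s := by nlinarith
  have hy2 : y ^ 2 ≤ 1 := by nlinarith
  -- pointwise lower bound on the integrand
  have hpt : ∀ x ∈ Set.Icc y (y * s),
      3/2 - x^2/(2*y^2) ≤ (((n : ℝ) + y ^ 2) / ((n : ℝ) + x ^ 2)) ^ (((n : ℝ) + 1) / 2) := by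
    intro x hx
    obtain ⟨hx1, hx2⟩ := hx
    have hx0 : 0 < x := lt_of_lt_of_le hy0 hx1
    have hden : 0 < (n:ℝ) + x ^ 2 := by positivity
    have hxy : y ^ 2 ≤ x ^ 2 := by nlinarith
    have ht : -1 ≤ (y^2 - x^2) / ((n:ℝ) + x^2) := by
      rw [le_div_iff₀ hden]; nlinarith
    have hp : (1:ℝ) ≤ ((n:ℝ) + 1) / 2 := by linarith
    have hb := one_add_mul_self_le_rpow_one_add ht hp
    have hbase : 1 + (y^2 - x^2)/((n:ℝ)+x^2) = ((n:ℝ)+y^2)/((n:ℝ)+x^2) := by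
      field_simp
      ring
    have h2 : ((n:ℝ)+1)*y^2 ≤ (n:ℝ)+x^2 := by
      nlinarith [mul_nonneg (by linarith : (0:ℝ) ≤ (n:ℝ)) (by linarith : (0:ℝ) ≤ 1 - y^2), hxy]
    have hfrac : (y^2 - x^2)/(2*y^2) ≤ (((n:ℝ)+1)/2) * ((y^2-x^2)/((n:ℝ)+x^2)) := by
      rw [div_mul_div_comm, div_le_div_iff₀ (by positivity) (by positivity)]
      nlinarith [mul_nonneg (sub_nonneg.2 hxy) (sub_nonneg.2 h2)]
    have hhalf : y^2/(2*y^2) = 1/2 := by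
      rw [div_eq_div_iff (by positivity) (by norm_num : (2:ℝ) ≠ 0)]; ring
    have e1 : 3/2 - x^2/(2*y^2) = 1 + (y^2-x^2)/(2*y^2) := by
      rw [sub_div, hhalf]; ring
    calc 3/2 - x^2/(2*y^2) = 1 + (y^2-x^2)/(2*y^2) := e1
      _ ≤ 1 + (((n:ℝ)+1)/2) * ((y^2-x^2)/((n:ℝ)+x^2)) := by linarith
      _ ≤ (1 + (y^2-x^2)/((n:ℝ)+x^2)) ^ (((n:ℝ)+1)/2) := hb
      _ = (((n:ℝ)+y^2)/((n:ℝ)+x^2)) ^ (((n:ℝ)+1)/2) := by rw [hbase]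
  -- integrability
  have hfc : Continuous fun x : ℝ => (((n:ℝ)+y^2)/((n:ℝ)+x^2)) ^ (((n:ℝ)+1)/2) := by
    apply Continuous.rpow_const
    · exact continuous_const.div (continuous_const.add (continuous_pow 2))
        (fun x => by positivity)
    · intro x; right; positivity
  have hfi : IntervalIntegrable
      (fun x : ℝ => (((n:ℝ)+y^2)/((n:ℝ)+x^2)) ^ (((n:ℝ)+1)/2)) volume y (y*s) :=
    hfc.intervalIntegrable _ _
  have hgc : Continuous fun x : ℝ => 3/2 - x^2/(2*y^2) :=
    continuous_const.sub ((continuous_pow 2).div_const _)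
  have hgi : IntervalIntegrable (fun x : ℝ => 3/2 - x^2/(2*y^2)) volume y (y*s) :=
    hgc.intervalIntegrable _ _
  have hmono := intervalIntegral.integral_mono_on hab hgi hfi hpt
  -- compute the lower integral
  have hgval : (∫ x in y..(y*s), (3/2 - x^2/(2*y^2)))
      = (y*s - y) * (3/2) - ((y*s)^3 - y^3)/3/(2*y^2) := by
    have hx2int : (∫ x in y..(y*s), x^2/(2*y^2)) = ((y*s)^3 - y^3)/3/(2*y^2) := by
      rw [intervalIntegral.integral_div, integral_pow]; norm_num
    rw [intervalIntegral.integral_sub intervalIntegrable_const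
      (((continuous_pow 2).intervalIntegrable _ _).div_const _),
      hx2int, intervalIntegral.integral_const]
    norm_num [smul_eq_mul]
  -- the key algebraic inequality
  have key : 6 < (n:ℝ) * ((s-1) * (8 - s - s^2)) := by
    nlinarith [hseq, hs1, hs3, hn3, sq_nonneg (s-1), sq_nonneg (s+1),
      mul_nonneg (mul_nonneg (sub_nonneg.2 hs1.le) (sub_nonneg.2 hs1.le)) (sub_nonneg.2 hs3),
      mul_pos (sub_pos.2 hs1) (sub_pos.2 hs1)]
  have hval : (n:ℝ) * ((y*s - y) * (3/2) - ((y*s)^3 - y^3)/3/(2*y^2))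
      = y * ((n:ℝ) * ((s-1) * (8 - s - s^2))) / 6 := by
    field_simp
    ring
  have hlt : y < (n:ℝ) * ((y*s - y) * (3/2) - ((y*s)^3 - y^3)/3/(2*y^2)) := by
    rw [hval, lt_div_iff₀ (by norm_num : (0:ℝ) < 6)]
    nlinarith [mul_lt_mul_of_pos_left key hy0]
  calc y < (n:ℝ) * ((y*s - y) * (3/2) - ((y*s)^3 - y^3)/3/(2*y^2)) := hlt
    _ = (n:ℝ) * ∫ x in y..(y*s), (3/2 - x^2/(2*y^2)) := by rw [hgval]
    _ ≤ (n:ℝ) * ∫ x in y..(y*s), (((n:ℝ)+y^2)/((n:ℝ)+x^2)) ^ (((n:ℝ)+1)/2) := by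
        exact mul_le_mul_of_nonneg_left hmono (by positivity)
end

section
/- For any y > 0, inf over all α > 0 and all sufficiently small shape parameters of P(|X_α - Γ(1+1/α)| ≥ y√(Γ(1+2/α) - Γ(1+1/α)²)) equals 0, where X_α is Weibull with shape α and rate 1. Consequently the anti-concentration function of the Weibull family is identically zero. -/
open MeasureTheory Filter Real Set

/-- Law of the Weibull distribution with shape `a` and rate `1`:
density `a x^{a-1} e^{-x^a}` for `x > 0`. -/
noncomputable def weibullMeasure (a : ℝ) : Measure ℝ :=
  volume.withDensity fun x =>
    ENNReal.ofReal (if 0 < x then a * x ^ (a - 1) * Real.exp (-(x ^ a)) else 0)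

open scoped Topology ENNReal

lemma weibull_tail (a t : ℝ) (ha : 0 < a) (ht : 0 < t) :
    weibullMeasure a (Ici t) = ENNReal.ofReal (Real.exp (-(t ^ a))) := by
  rw [weibullMeasure, withDensity_apply _ measurableSet_Ici,
    ← setLIntegral_congr Ioi_ae_eq_Ici]
  have key : ∀ᵐ x ∂volume, x ∈ Ioi t →
      ENNReal.ofReal (if 0 < x then a * x ^ (a - 1) * Real.exp (-(x ^ a)) else 0)
        = ENNReal.ofReal (a * x ^ (a - 1) * Real.exp (-(x ^ a))) := by
    filter_upwards with x hx
    rw [if_pos (ht.trans hx)]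
  rw [setLIntegral_congr_fun_ae measurableSet_Ioi key]
  have hderiv : ∀ x ∈ Ici t, HasDerivAt (fun x : ℝ => -Real.exp (-(x ^ a)))
      (a * x ^ (a - 1) * Real.exp (-(x ^ a))) x := by
    intro x hx
    have hx0 : x ≠ 0 := (ht.trans_le hx).ne'
    have h1 : HasDerivAt (fun x : ℝ => x ^ a) (a * x ^ (a - 1)) x :=
      Real.hasDerivAt_rpow_const (Or.inl hx0)
    have h3 := (Real.hasDerivAt_exp (-(x ^ a))).comp x h1.neg
    have h4 := h3.neg
    exact h4.congr_deriv (by ring)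
  have hpos : ∀ x ∈ Ioi t, 0 ≤ a * x ^ (a - 1) * Real.exp (-(x ^ a)) := by
    intro x hx
    have : (0:ℝ) < x := ht.trans hx
    positivity
  have htend : Tendsto (fun x : ℝ => -Real.exp (-(x ^ a))) atTop (𝓝 0) := by
    have h1 : Tendsto (fun x : ℝ => x ^ a) atTop atTop := tendsto_rpow_atTop ha
    have h2 := (Real.tendsto_exp_neg_atTop_nhds_zero.comp h1).neg
    simpa using h2
  have hint : IntegrableOn (fun x => a * x ^ (a - 1) * Real.exp (-(x ^ a))) (Ioi t) :=
    integrableOn_Ioi_deriv_of_nonneg' hderiv hpos htend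
  have hval := integral_Ioi_of_hasDerivAt_of_nonneg' hderiv hpos htend
  rw [← ofReal_integral_eq_lintegral_ofReal hint
    ((ae_restrict_iff' measurableSet_Ioi).2 (ae_of_all _ hpos)), hval]
  · norm_num

lemma weibull_neg (a : ℝ) : weibullMeasure a (Iic 0) = 0 := by
  rw [weibullMeasure, withDensity_apply _ measurableSet_Iic]
  have key : ∀ᵐ x ∂volume, x ∈ Iic (0:ℝ) →
      ENNReal.ofReal (if 0 < x then a * x ^ (a - 1) * Real.exp (-(x ^ a)) else 0)
        = (0 : ℝ≥0∞) := by
    filter_upwards with x hx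
    rw [if_neg (not_lt.2 hx), ENNReal.ofReal_zero]
  rw [setLIntegral_congr_fun_ae measurableSet_Iic key, lintegral_zero]

/-- For any `y > 0`,
`inf_{α > 0} P(|X_α - Γ(1+1/α)| ≥ y √(Γ(1+2/α) - Γ(1+1/α)²)) = 0` where `X_α` is Weibull
with shape `α` and rate `1`; i.e. the anti-concentration function of the Weibull family is
identically zero. -/
theorem weibull_no_anticoncentration (y : ℝ) (hy : 0 < y) :
    (⨅ a : Set.Ioi (0 : ℝ),
        weibullMeasure a
          {x : ℝ | y * Real.sqrt (Real.Gamma (1 + 2 / (a : ℝ))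
              - Real.Gamma (1 + 1 / (a : ℝ)) ^ 2)
            ≤ |x - Real.Gamma (1 + 1 / (a : ℝ))|}) = 0 := by

  refine le_antisymm ?_ zero_le
  refine ENNReal.le_of_forall_pos_le_add fun ε hε _ => ?_
  rw [zero_add]
  set T : ℝ := max 1 (-Real.log ε) with hTdef
  have hT1 : (1:ℝ) ≤ T := le_max_left _ _
  have hT0 : (0:ℝ) < T := lt_of_lt_of_le one_pos hT1
  have hεR : (0:ℝ) < (ε:ℝ) := hε
  have hexpT : Real.exp (-T) ≤ (ε:ℝ) := by
    have h := Real.exp_le_exp.2 (neg_le_neg (le_max_right 1 (-Real.log ε)))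
    rwa [neg_neg, Real.exp_log hεR] at h
  have E2 : ∀ᶠ n : ℕ in atTop, T ^ n ≤ (n.factorial : ℝ) := by
    have h := (FloorSemiring.tendsto_pow_div_factorial_atTop (K := ℝ) T).eventually_lt_const
      one_pos
    filter_upwards [h] with n hn
    have hf : (0:ℝ) < (n.factorial : ℝ) := by exact_mod_cast n.factorial_pos
    rw [div_lt_one hf] at hn
    exact hn.le
  have E1 : ∀ᶠ n : ℕ in atTop, (1 + y^2) * ((n.factorial : ℝ))^2 ≤ y^2 * ((2*n).factorial : ℝ) := by
    have hlin : Tendsto (fun n : ℕ => (2*(n:ℝ))) atTop atTop :=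
      (tendsto_natCast_atTop_atTop (R := ℝ)).const_mul_atTop two_pos
    filter_upwards [hlin.eventually_ge_atTop ((1+y^2)/y^2)] with n hn
    have hcb : (2*(n:ℝ)) ≤ (Nat.centralBinom n : ℝ) := by
      have h1 := Nat.choose_le_middle 1 (2*n)
      rw [Nat.choose_one_right] at h1
      have : (2*n)/2 = n := by omega
      rw [this] at h1
      exact_mod_cast h1
    have hfact : ((2*n).factorial : ℝ) = (Nat.centralBinom n : ℝ) * ((n.factorial : ℝ))^2 := by
      have h2 := Nat.choose_mul_factorial_mul_factorial (Nat.le_mul_of_pos_left n two_pos)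
      have h3 : 2*n - n = n := by omega
      rw [h3] at h2
      rw [Nat.centralBinom]
      push_cast [← h2]
      ring
    have hy2 : (0:ℝ) < y^2 := by positivity
    have hkey : (1 + y^2) ≤ y^2 * (2*(n:ℝ)) := by
      rw [div_le_iff₀ hy2] at hn
      linarith
    have hff : (0:ℝ) ≤ ((n.factorial : ℝ))^2 := sq_nonneg _
    calc (1 + y^2) * ((n.factorial : ℝ))^2 ≤ (y^2 * (2*(n:ℝ))) * ((n.factorial : ℝ))^2 := by
          exact mul_le_mul_of_nonneg_right hkey hff
      _ ≤ (y^2 * (Nat.centralBinom n : ℝ)) * ((n.factorial : ℝ))^2 := by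
          have := mul_le_mul_of_nonneg_left hcb hy2.le
          exact mul_le_mul_of_nonneg_right this hff
      _ = y^2 * ((2*n).factorial : ℝ) := by rw [hfact]; ring
  obtain ⟨n, h1, h2, hn1⟩ := (E1.and (E2.and (eventually_ge_atTop 1))).exists
  have hn0 : (0:ℝ) < (n:ℝ) := by exact_mod_cast hn1
  set a : ℝ := 1 / (n:ℝ) with hadef
  have ha : a ∈ Set.Ioi (0:ℝ) := by
    simp only [Set.mem_Ioi, hadef]
    positivity
  refine le_trans (iInf_le _ ⟨a, ha⟩) ?_
  have hinv : 1 / a = (n:ℝ) := one_div_one_div _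
  have hμ : Real.Gamma (1 + 1/a) = (n.factorial : ℝ) := by
    rw [hinv, add_comm, Real.Gamma_nat_eq_factorial]
  have h2g : Real.Gamma (1 + 2/a) = ((2*n).factorial : ℝ) := by
    have h2a : 2 / a = ((2*n : ℕ) : ℝ) := by
      rw [hadef]
      push_cast
      field_simp
    rw [h2a, add_comm, Real.Gamma_nat_eq_factorial]
  set μ : ℝ := (n.factorial : ℝ) with hμdef
  set V : ℝ := ((2*n).factorial : ℝ) - μ^2 with hVdef
  have hμpos : (0:ℝ) < μ := by rw [hμdef]; exact_mod_cast n.factorial_pos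
  have hVy : μ^2 ≤ y^2 * V := by
    rw [hVdef]
    nlinarith [h1]
  have hμle : μ ≤ y * Real.sqrt V := by
    have hs : μ ≤ Real.sqrt (y^2 * V) := (Real.le_sqrt hμpos.le (le_trans (sq_nonneg μ) hVy)).2 hVy
    rwa [Real.sqrt_mul (sq_nonneg y), Real.sqrt_sq hy.le] at hs
  have hset : {x : ℝ | y * Real.sqrt (Real.Gamma (1 + 2/a) - Real.Gamma (1 + 1/a)^2)
      ≤ |x - Real.Gamma (1 + 1/a)|} = {x : ℝ | y * Real.sqrt V ≤ |x - μ|} := by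
    simp only [hμ, h2g, hμdef, hVdef]
  have hsub : {x : ℝ | y * Real.sqrt V ≤ |x - μ|} ⊆ Iic 0 ∪ Ici μ := by
    intro x hx
    simp only [Set.mem_setOf_eq] at hx
    have hnn : 0 ≤ y * Real.sqrt V := mul_nonneg hy.le (Real.sqrt_nonneg _)
    rcases abs_cases (x - μ) with ⟨he, _⟩ | ⟨he, _⟩
    · right
      rw [he] at hx
      simp only [Set.mem_Ici]
      linarith
    · left
      rw [he] at hx
      simp only [Set.mem_Iic]
      linarith
  calc weibullMeasure a {x : ℝ | y * Real.sqrt (Real.Gamma (1 + 2/a)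
        - Real.Gamma (1 + 1/a)^2) ≤ |x - Real.Gamma (1 + 1/a)|}
      ≤ weibullMeasure a (Iic 0 ∪ Ici μ) := by
        rw [hset]; exact measure_mono hsub
    _ ≤ weibullMeasure a (Iic 0) + weibullMeasure a (Ici μ) := measure_union_le _ _
    _ = ENNReal.ofReal (Real.exp (-(μ ^ a))) := by
        rw [weibull_neg, weibull_tail a μ ha hμpos, zero_add]
    _ ≤ (ε : ℝ≥0∞) := by
        rw [← ENNReal.ofReal_coe_nnreal]
        apply ENNReal.ofReal_le_ofReal
        have hμa : T ≤ μ ^ a := by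
          have hr := Real.rpow_le_rpow (by positivity) h2 (le_of_lt (by positivity : (0:ℝ) < a))
          rwa [← Real.rpow_natCast T n, ← Real.rpow_mul hT0.le, hadef,
            mul_one_div, div_self hn0.ne', Real.rpow_one] at hr
        calc Real.exp (-(μ ^ a)) ≤ Real.exp (-T) := Real.exp_le_exp.2 (neg_le_neg hμa)
          _ ≤ (ε:ℝ) := hexpT
end

section
/- Let X_σ = e^{α+σY} where Y is standard normal, α ∈ ℝ, σ > 0 (log-normal). For any y > 0, if σ² > ln((1+y²)/y²), then P(|X_σ - e^{α+σ²/2}| ≥ y·e^{α+σ²/2}√(e^{σ²}-1)) = 1 - Φ(σ/2 + ln(1 + y√(e^{σ²}-1))/σ), and this tends to 0 as σ → +∞. Hence the anti-concentration function of the log-normal family is 0. -/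
open MeasureTheory ProbabilityTheory Filter Real Set

lemma lognormal_singleton_zero (c : ℝ) : (gaussianReal 0 1) {c} = 0 :=
  (gaussianReal_absolutelyContinuous 0 (by norm_num)) (measure_singleton c)

lemma lognormal_set_eq (y : ℝ) (hy : 0 < y) (a σ : ℝ) (hσ : 0 < σ)
    (hcond : Real.log ((1 + y ^ 2) / y ^ 2) < σ ^ 2) :
    {t : ℝ | y * Real.exp (a + σ ^ 2 / 2) * Real.sqrt (Real.exp (σ ^ 2) - 1)
        ≤ |Real.exp (a + σ * t) - Real.exp (a + σ ^ 2 / 2)|}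
      = Set.Ici (σ / 2 + Real.log (1 + y * Real.sqrt (Real.exp (σ ^ 2) - 1)) / σ) := by
  have hE1 : (1 + y ^ 2) / y ^ 2 < Real.exp (σ ^ 2) := by
    have := Real.exp_lt_exp.2 hcond
    rwa [Real.exp_log (by positivity)] at this
  have hEpos : 0 < Real.exp (σ ^ 2) - 1 := by
    have h1 : 1 < (1 + y ^ 2) / y ^ 2 := by
      rw [lt_div_iff₀ (by positivity)]; nlinarith
    linarith
  set L : ℝ := y * Real.sqrt (Real.exp (σ ^ 2) - 1) with hL
  have hLpos : 0 < L := by positivity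
  have hL1 : 1 < L := by
    have hE2 : 1 / y ^ 2 < Real.exp (σ ^ 2) - 1 := by
      have key : (1 + y ^ 2) / y ^ 2 = 1 / y ^ 2 + 1 := by field_simp
      linarith [hE1, key ▸ hE1]
    have hL2 : 1 < L ^ 2 := by
      have hLsq : L ^ 2 = y ^ 2 * (Real.exp (σ ^ 2) - 1) := by
        rw [hL, mul_pow, Real.sq_sqrt hEpos.le]
      have hy2 : (0:ℝ) < y ^ 2 := by positivity
      rw [hLsq]
      calc 1 = y ^ 2 * (1 / y ^ 2) := by field_simp
        _ < y ^ 2 * (Real.exp (σ ^ 2) - 1) := by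
            exact mul_lt_mul_of_pos_left hE2 hy2
    nlinarith
  set m : ℝ := Real.exp (a + σ ^ 2 / 2) with hm
  have hmpos : 0 < m := Real.exp_pos _
  ext t
  simp only [Set.mem_setOf_eq, Set.mem_Ici]
  rw [le_abs]
  constructor
  · rintro (h | h)
    · -- m + y*m*√(E-1) ≤ exp(a+σt)
      have hle : m * (1 + L) ≤ Real.exp (a + σ * t) := by nlinarith
      have : Real.exp (a + σ ^ 2 / 2 + Real.log (1 + L)) ≤ Real.exp (a + σ * t) := by
        rwa [Real.exp_add, Real.exp_log (by linarith), ← hm]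
      have h2 := Real.exp_le_exp.1 this
      have heq : σ / 2 + Real.log (1 + L) / σ = (σ ^ 2 / 2 + Real.log (1 + L)) / σ := by
        field_simp
      rw [heq, div_le_iff₀ hσ]
      nlinarith
    · exfalso
      have : Real.exp (a + σ * t) ≤ m - y * m * Real.sqrt (Real.exp (σ ^ 2) - 1) := by
        linarith
      have hneg : m - y * m * Real.sqrt (Real.exp (σ ^ 2) - 1) = m * (1 - L) := by
        rw [hL]; ring
      have := (Real.exp_pos (a + σ * t)).trans_le this
      rw [hneg] at this
      nlinarith
  · intro ht
    left
    have h3 : σ * (σ / 2 + Real.log (1 + L) / σ) ≤ σ * t := by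
      exact mul_le_mul_of_nonneg_left ht hσ.le
    have h4 : σ ^ 2 / 2 + Real.log (1 + L) ≤ σ * t := by
      have : σ * (σ / 2 + Real.log (1 + L) / σ) = σ ^ 2 / 2 + Real.log (1 + L) := by
        field_simp
      linarith
    have : Real.exp (a + σ ^ 2 / 2 + Real.log (1 + L)) ≤ Real.exp (a + σ * t) := by
      apply Real.exp_le_exp.2; linarith
    rw [Real.exp_add, Real.exp_log (by linarith), ← hm] at this
    nlinarith

lemma lognormal_prob_eq (y : ℝ) (hy : 0 < y) (a σ : ℝ) (hσ : 0 < σ)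
    (hcond : Real.log ((1 + y ^ 2) / y ^ 2) < σ ^ 2) :
    (gaussianReal 0 1) {t : ℝ |
        y * Real.exp (a + σ ^ 2 / 2) * Real.sqrt (Real.exp (σ ^ 2) - 1)
          ≤ |Real.exp (a + σ * t) - Real.exp (a + σ ^ 2 / 2)|}
      = 1 - (gaussianReal 0 1)
          (Set.Iic (σ / 2 + Real.log (1 + y * Real.sqrt (Real.exp (σ ^ 2) - 1)) / σ)) := by
  rw [lognormal_set_eq y hy a σ hσ hcond]
  set c := σ / 2 + Real.log (1 + y * Real.sqrt (Real.exp (σ ^ 2) - 1)) / σ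
  have h1 : (gaussianReal 0 1) (Set.Ici c) = (gaussianReal 0 1) (Set.Ioi c) :=
    (measure_congr (MeasureTheory.Ioi_ae_eq_Ici' (lognormal_singleton_zero c))).symm
  have h2 : (gaussianReal 0 1) (Set.Iic c) + (gaussianReal 0 1) (Set.Ioi c) = 1 := by
    rw [← measure_union (Set.Iic_disjoint_Ioi le_rfl) measurableSet_Ioi,
      Set.Iic_union_Ioi, measure_univ]
  rw [h1, ← h2, ENNReal.add_sub_cancel_left (measure_ne_top _ _)]

set_option maxHeartbeats 1000000 in
/-- Let `X_σ = e^{α+σY}` with `Y` standard normal (log-normal). For `y > 0`: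
if `σ² > ln((1+y²)/y²)` then
`P(|X_σ - e^{α+σ²/2}| ≥ y e^{α+σ²/2} √(e^{σ²}-1)) = 1 - Φ(σ/2 + ln(1+y√(e^{σ²}-1))/σ)`;
this tends to `0` as `σ → +∞`; hence the anti-concentration function of the log-normal
family is `0`. -/
theorem lognormal_no_anticoncentration (y : ℝ) (hy : 0 < y) :
    (∀ a σ : ℝ, 0 < σ → Real.log ((1 + y ^ 2) / y ^ 2) < σ ^ 2 →
      (gaussianReal 0 1) {t : ℝ |
          y * Real.exp (a + σ ^ 2 / 2) * Real.sqrt (Real.exp (σ ^ 2) - 1)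
            ≤ |Real.exp (a + σ * t) - Real.exp (a + σ ^ 2 / 2)|}
        = 1 - (gaussianReal 0 1)
            (Set.Iic (σ / 2 + Real.log (1 + y * Real.sqrt (Real.exp (σ ^ 2) - 1)) / σ))) ∧
    (∀ a : ℝ,
      Tendsto (fun σ : ℝ => (gaussianReal 0 1) {t : ℝ |
          y * Real.exp (a + σ ^ 2 / 2) * Real.sqrt (Real.exp (σ ^ 2) - 1)
            ≤ |Real.exp (a + σ * t) - Real.exp (a + σ ^ 2 / 2)|})
        atTop (nhds 0)) ∧
    (⨅ p : {q : ℝ × ℝ // 0 < q.2},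
        (gaussianReal 0 1) {t : ℝ |
          y * Real.exp (p.1.1 + p.1.2 ^ 2 / 2) * Real.sqrt (Real.exp (p.1.2 ^ 2) - 1)
            ≤ |Real.exp (p.1.1 + p.1.2 * t) - Real.exp (p.1.1 + p.1.2 ^ 2 / 2)|}) = 0 := by
  -- upper bound tending to zero
  have hIci : Tendsto (fun σ : ℝ => (gaussianReal 0 1) (Set.Ici (σ / 2))) atTop (nhds 0) := by
    have hinter : (⋂ σ : ℝ, Set.Ici (σ / 2)) = (∅ : Set ℝ) := by
      ext t
      simp only [Set.mem_iInter, Set.mem_Ici, Set.mem_empty_iff_false, iff_false, not_forall]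
      exact ⟨2 * t + 2, by linarith⟩
    have := tendsto_measure_iInter_atTop (μ := gaussianReal 0 1)
      (s := fun σ : ℝ => Set.Ici (σ / 2))
      (fun σ => measurableSet_Ici.nullMeasurableSet)
      (fun i j hij => Set.Ici_subset_Ici.2 (by linarith))
      ⟨0, measure_ne_top _ _⟩
    rwa [hinter, measure_empty] at this
  have htend : ∀ a : ℝ,
      Tendsto (fun σ : ℝ => (gaussianReal 0 1) {t : ℝ |
          y * Real.exp (a + σ ^ 2 / 2) * Real.sqrt (Real.exp (σ ^ 2) - 1)
            ≤ |Real.exp (a + σ * t) - Real.exp (a + σ ^ 2 / 2)|})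
        atTop (nhds 0) := by
    intro a
    apply tendsto_of_tendsto_of_tendsto_of_le_of_le' tendsto_const_nhds hIci
    · exact Eventually.of_forall fun _ => zero_le
    · have hev : ∀ᶠ σ : ℝ in atTop,
          (0 < σ ∧ Real.log ((1 + y ^ 2) / y ^ 2) < σ ^ 2) := by
        filter_upwards [eventually_gt_atTop (max 1 (Real.log ((1 + y ^ 2) / y ^ 2)))]
          with σ hσ
        have h1 : 1 < σ := lt_of_le_of_lt (le_max_left _ _) hσ
        refine ⟨by linarith, ?_⟩
        have h2 : Real.log ((1 + y ^ 2) / y ^ 2) < σ := lt_of_le_of_lt (le_max_right _ _) hσ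
        nlinarith
      filter_upwards [hev] with σ hσ
      obtain ⟨hσ0, hcond⟩ := hσ
      rw [lognormal_set_eq y hy a σ hσ0 hcond]
      apply measure_mono
      apply Set.Ici_subset_Ici.2
      have hL : 0 ≤ y * Real.sqrt (Real.exp (σ ^ 2) - 1) := by positivity
      have : 0 ≤ Real.log (1 + y * Real.sqrt (Real.exp (σ ^ 2) - 1)) :=
        Real.log_nonneg (by linarith)
      have : 0 ≤ Real.log (1 + y * Real.sqrt (Real.exp (σ ^ 2) - 1)) / σ := by positivity
      linarith
  refine ⟨fun a σ hσ hcond => lognormal_prob_eq y hy a σ hσ hcond, htend, ?_⟩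
  by_contra h
  have hpos : 0 < ⨅ p : {q : ℝ × ℝ // 0 < q.2},
      (gaussianReal 0 1) {t : ℝ |
        y * Real.exp (p.1.1 + p.1.2 ^ 2 / 2) * Real.sqrt (Real.exp (p.1.2 ^ 2) - 1)
          ≤ |Real.exp (p.1.1 + p.1.2 * t) - Real.exp (p.1.1 + p.1.2 ^ 2 / 2)|} :=
    pos_iff_ne_zero.2 h
  have h2 := (htend 0).eventually_lt_const hpos
  obtain ⟨σ, hσ0, hlt⟩ := ((eventually_gt_atTop (0:ℝ)).and h2).exists
  have hle := iInf_le (fun p : {q : ℝ × ℝ // 0 < q.2} =>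
      (gaussianReal 0 1) {t : ℝ |
        y * Real.exp (p.1.1 + p.1.2 ^ 2 / 2) * Real.sqrt (Real.exp (p.1.2 ^ 2) - 1)
          ≤ |Real.exp (p.1.1 + p.1.2 * t) - Real.exp (p.1.1 + p.1.2 ^ 2 / 2)|})
    ⟨(0, σ), hσ0⟩
  simp only at hle
  exact absurd hle (not_le.2 hlt)
end

section
/- Let X_q be Beta(1,q) with density q(1-x)^{q-1} on (0,1). For any y > 0, for all sufficiently small q > 0, P(|X_q - 1/(1+q)| ≥ y√(q/((1+q)²(2+q)))) = P(X_q ≤ 1/(1+q) - y√(q/((1+q)²(2+q)))), and this probability is at most 1 - (q/(1+q))^q, which tends to 0 as q ↓ 0. Hence the anti-concentration function of the Beta family is identically zero. -/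
open MeasureTheory Filter Real Set

/-- Law of the Beta distribution with parameters `p, q`:
density `Γ(p+q)/(Γ(p)Γ(q)) x^{p-1} (1-x)^{q-1}` on `(0,1)`. -/
noncomputable def betaMeasure (p q : ℝ) : Measure ℝ :=
  volume.withDensity fun x =>
    ENNReal.ofReal
      (if 0 < x ∧ x < 1 then
        Real.Gamma (p + q) / (Real.Gamma p * Real.Gamma q) * x ^ (p - 1) * (1 - x) ^ (q - 1)
      else 0)

lemma beta1_density (q : ℝ) (hq : 0 < q) :
    betaMeasure 1 q = volume.withDensity fun x =>
      ENNReal.ofReal ((Set.Ioo (0:ℝ) 1).indicator (fun x => q * (1 - x) ^ (q - 1)) x) := by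
  unfold betaMeasure
  congr 1
  ext x
  rw [Set.indicator_apply]
  simp only [mem_Ioo]
  congr 1
  by_cases h : 0 < x ∧ x < 1
  · rw [if_pos h, if_pos h]
    have : Real.Gamma (1 + q) = q * Real.Gamma q := by
      rw [add_comm, Real.Gamma_add_one hq.ne']
    rw [this, Real.Gamma_one, sub_self, Real.rpow_zero]
    field_simp [(Real.Gamma_pos_of_pos hq).ne']
  · rw [if_neg h, if_neg h]

lemma beta1_tail (q : ℝ) (hq : 0 < q) (b : ℝ) (hb : 1 ≤ b) :
    betaMeasure 1 q {x : ℝ | b ≤ x} = 0 := by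
  have hIci : {x : ℝ | b ≤ x} = Set.Ici b := rfl
  rw [hIci, beta1_density q hq, withDensity_apply _ (measurableSet_Ici (a := b))]
  rw [setLIntegral_congr_fun (measurableSet_Ici (a := b))
    (fun x hx => ?_), lintegral_zero]
  rw [Set.indicator_of_notMem, ENNReal.ofReal_zero]
  simp only [mem_Ioo, not_and]
  intro _
  linarith [hx.out]

lemma beta1_Iic (q : ℝ) (hq : 0 < q) (a : ℝ) (ha : 0 < a) (ha1 : a < 1) :
    betaMeasure 1 q (Set.Iic a) = ENNReal.ofReal (1 - (1 - a) ^ q) := by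
  rw [beta1_density q hq, withDensity_apply _ measurableSet_Iic]
  have hind : ∀ x : ℝ, ENNReal.ofReal ((Set.Ioo (0:ℝ) 1).indicator (fun x => q * (1 - x) ^ (q - 1)) x)
      = (Set.Ioo (0:ℝ) 1).indicator (fun x => ENNReal.ofReal (q * (1 - x) ^ (q - 1))) x := by
    intro x
    by_cases h : x ∈ Set.Ioo (0:ℝ) 1 <;>
      simp [Set.indicator_apply, h]
  simp_rw [hind]
  rw [lintegral_indicator measurableSet_Ioo, Measure.restrict_restrict measurableSet_Ioo]
  have hset : Set.Ioo (0:ℝ) 1 ∩ Set.Iic a = Set.Ioc 0 a := by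
    ext x
    simp only [mem_inter_iff, mem_Ioo, mem_Iic, mem_Ioc]
    constructor
    · rintro ⟨⟨h1, _⟩, h3⟩; exact ⟨h1, h3⟩
    · rintro ⟨h1, h2⟩; exact ⟨⟨h1, lt_of_le_of_lt h2 ha1⟩, h2⟩
  rw [hset]
  have hcont : ContinuousOn (fun x : ℝ => q * (1 - x) ^ (q - 1)) (Set.Icc 0 a) := by
    apply ContinuousOn.mul continuousOn_const
    apply ContinuousOn.rpow_const (by fun_prop)
    intro x hx
    left
    have := hx.2
    intro h
    nlinarith [hx.1, hx.2]
  have hint : IntegrableOn (fun x : ℝ => q * (1 - x) ^ (q - 1)) (Set.Ioc 0 a) volume := by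
    exact (hcont.integrableOn_compact isCompact_Icc).mono_set Set.Ioc_subset_Icc_self
  rw [← ofReal_integral_eq_lintegral_ofReal hint]
  · congr 1
    rw [← intervalIntegral.integral_of_le ha.le]
    have : ∀ x ∈ Set.uIcc (0:ℝ) a, HasDerivAt (fun t : ℝ => -(1 - t) ^ q)
        (q * (1 - x) ^ (q - 1)) x := by
      intro x hx
      rw [Set.uIcc_of_le ha.le] at hx
      have h1x : (0:ℝ) < 1 - x := by linarith [hx.2, ha1]
      have hd : HasDerivAt (fun t : ℝ => (1 - t) ^ q) (q * (1 - x) ^ (q - 1) * (-1)) x := by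
        have := (Real.hasDerivAt_rpow_const (x := 1 - x) (p := q) (Or.inl h1x.ne'))
        exact this.comp x (by simpa using (hasDerivAt_id x).const_sub 1)
      have := hd.neg; simp only [mul_neg, mul_one, neg_neg] at this; exact this
    rw [intervalIntegral.integral_eq_sub_of_hasDerivAt this
      ((hcont.mono (by rw [Set.uIcc_of_le ha.le])).intervalIntegrable)]
    simp [Real.one_rpow]
    ring
  · filter_upwards [ae_restrict_mem measurableSet_Ioc] with x hx
    have : (0:ℝ) < 1 - x := by linarith [hx.2, ha1]
    positivity

lemma part2 : Tendsto (fun q : ℝ => (q / (1 + q)) ^ q) (nhdsWithin 0 (Set.Ioi 0)) (nhds 1) := by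
  have h1 : Tendsto (fun q : ℝ => q ^ q) (nhdsWithin 0 (Set.Ioi 0)) (nhds 1) := by
    have h := (Real.continuous_exp.tendsto 0).comp
      (tendsto_log_mul_rpow_nhdsGT_zero one_pos)
    rw [Real.exp_zero] at h
    apply h.congr'
    filter_upwards [self_mem_nhdsWithin] with q hq
    simp only [Function.comp_apply, Real.rpow_one]
    rw [Real.rpow_def_of_pos hq, mul_comm]
  have h2 : Tendsto (fun q : ℝ => (1 + q) ^ q) (nhdsWithin 0 (Set.Ioi 0)) (nhds 1) := by
    have hc : ContinuousAt (fun p : ℝ × ℝ => p.1 ^ p.2) (1, 0) :=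
      Real.continuousAt_rpow (1, 0) (Or.inl one_ne_zero)
    have hp : Tendsto (fun q : ℝ => ((1 + q : ℝ), q)) (nhdsWithin 0 (Set.Ioi 0))
        (nhds ((1 : ℝ), (0 : ℝ))) := by
      apply Filter.Tendsto.mono_left _ nhdsWithin_le_nhds
      have : Tendsto (fun q : ℝ => ((1 + q : ℝ), q)) (nhds 0) (nhds ((1 + 0 : ℝ), (0:ℝ))) := by
        exact ((continuous_const.add continuous_id).prodMk continuous_id).tendsto 0
      simpa using this
    have := hc.tendsto.comp hp
    simpa [Function.comp_def] using this
  have := h1.div h2 one_ne_zero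
  rw [div_one] at this
  apply this.congr'
  filter_upwards [self_mem_nhdsWithin] with q hq
  have hq' : (0:ℝ) < q := hq
  simp only [Pi.div_apply]
  rw [Real.div_rpow hq'.le (by linarith)]

/-- Let `X_q` be `Beta(1, q)`. For any `y > 0`, for all sufficiently small
`q > 0`, `P(|X_q - 1/(1+q)| ≥ y√(q/((1+q)²(2+q)))) =
P(X_q ≤ 1/(1+q) - y√(q/((1+q)²(2+q))))`, this is at most `1 - (q/(1+q))^q`, and
`(q/(1+q))^q → 1` as `q ↓ 0`; hence the anti-concentration function of the Beta family
is identically zero. -/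
theorem beta_no_anticoncentration (y : ℝ) (hy : 0 < y) :
    (∀ᶠ q : ℝ in nhdsWithin 0 (Set.Ioi 0),
      betaMeasure 1 q {x : ℝ |
          y * Real.sqrt (q / ((1 + q) ^ 2 * (2 + q))) ≤ |x - 1 / (1 + q)|}
        = betaMeasure 1 q {x : ℝ |
            x ≤ 1 / (1 + q) - y * Real.sqrt (q / ((1 + q) ^ 2 * (2 + q)))} ∧
      betaMeasure 1 q {x : ℝ |
          x ≤ 1 / (1 + q) - y * Real.sqrt (q / ((1 + q) ^ 2 * (2 + q)))}
        ≤ ENNReal.ofReal (1 - (q / (1 + q)) ^ q)) ∧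
    Tendsto (fun q : ℝ => (q / (1 + q)) ^ q) (nhdsWithin 0 (Set.Ioi 0)) (nhds 1) ∧
    (⨅ w : {v : ℝ × ℝ // 0 < v.1 ∧ 0 < v.2},
        betaMeasure w.1.1 w.1.2 {x : ℝ |
          y * Real.sqrt (w.1.1 * w.1.2
              / ((w.1.1 + w.1.2) ^ 2 * (w.1.1 + w.1.2 + 1)))
            ≤ |x - w.1.1 / (w.1.1 + w.1.2)|}) = 0 := by
  have hσ0 : Tendsto (fun q : ℝ => y * Real.sqrt (q / ((1 + q) ^ 2 * (2 + q))))
      (nhdsWithin 0 (Set.Ioi 0)) (nhds 0) := by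
    have hc : ContinuousAt (fun q : ℝ => y * Real.sqrt (q / ((1 + q) ^ 2 * (2 + q)))) 0 := by
      apply ContinuousAt.mul continuousAt_const
      apply Real.continuous_sqrt.continuousAt.comp
      exact ContinuousAt.div (by fun_prop) (by fun_prop) (by norm_num)
    have := hc.continuousWithinAt.tendsto (s := Set.Ioi 0)
    norm_num at this
    exact this
  have hpart1 : ∀ᶠ q : ℝ in nhdsWithin 0 (Set.Ioi 0),
      betaMeasure 1 q {x : ℝ |
          y * Real.sqrt (q / ((1 + q) ^ 2 * (2 + q))) ≤ |x - 1 / (1 + q)|}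
        = betaMeasure 1 q {x : ℝ |
            x ≤ 1 / (1 + q) - y * Real.sqrt (q / ((1 + q) ^ 2 * (2 + q)))} ∧
      betaMeasure 1 q {x : ℝ |
          x ≤ 1 / (1 + q) - y * Real.sqrt (q / ((1 + q) ^ 2 * (2 + q)))}
        ≤ ENNReal.ofReal (1 - (q / (1 + q)) ^ q) := by
    filter_upwards [self_mem_nhdsWithin,
      eventually_lt_nhds (show (0:ℝ) < 1 by norm_num)
        |>.filter_mono nhdsWithin_le_nhds,
      hσ0.eventually (eventually_lt_nhds (show (0:ℝ) < 1/2 by norm_num)) |>.mono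
        (fun q h => h),
      eventually_lt_nhds (show (0:ℝ) < y^2/3 by positivity)
        |>.filter_mono nhdsWithin_le_nhds] with q hq hq1 h3 h4
    replace hq : 0 < q := hq
    set σ := Real.sqrt (q / ((1 + q) ^ 2 * (2 + q))) with hσdef
    have h1q : (0:ℝ) < 1 + q := by linarith
    have h2q : (0:ℝ) < 2 + q := by linarith
    have hs : 0 < q / ((1 + q) ^ 2 * (2 + q)) := by positivity
    have hσpos : 0 < σ := Real.sqrt_pos.mpr hs
    set m : ℝ := 1 / (1 + q) with hmdef
    have hm1 : m < 1 := by
      rw [hmdef, div_lt_one h1q]; linarith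
    have hm2 : 1/2 < m := by
      rw [hmdef]
      rw [div_lt_div_iff₀ (by norm_num) h1q]
      linarith
    have ha : 0 < m - y * σ := by linarith
    have ha1 : m - y * σ < 1 := by nlinarith [mul_pos hy hσpos]
    have hqm : 1 - m = q / (1 + q) := by
      rw [hmdef]; field_simp; ring
    have hb : 1 < m + y * σ := by
      have h5 : q * (2 + q) < y ^ 2 := by nlinarith
      have key : q / (1 + q) < y * σ := by
        rw [hσdef, show y * Real.sqrt (q / ((1 + q) ^ 2 * (2 + q)))
            = Real.sqrt (y ^ 2 * (q / ((1 + q) ^ 2 * (2 + q)))) by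
          rw [Real.sqrt_mul (sq_nonneg y), Real.sqrt_sq hy.le]]
        rw [Real.lt_sqrt (by positivity), div_pow, div_lt_iff₀ (by positivity)]
        have heq2 : y ^ 2 * (q / ((1 + q) ^ 2 * (2 + q))) * (1 + q) ^ 2
            = y ^ 2 * q / (2 + q) := by
          field_simp
        rw [heq2, lt_div_iff₀ h2q]
        nlinarith
      linarith [hqm ▸ key]
    have hset : {x : ℝ | y * σ ≤ |x - m|}
        = Set.Iic (m - y * σ) ∪ {x : ℝ | m + y * σ ≤ x} := by
      ext x
      simp only [Set.mem_setOf_eq, Set.mem_union, Set.mem_Iic, le_abs]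
      constructor
      · rintro (h | h)
        · right; linarith
        · left; linarith
      · rintro (h | h)
        · right; linarith
        · left; linarith
    have htail : betaMeasure 1 q {x : ℝ | m + y * σ ≤ x} = 0 :=
      beta1_tail q hq _ hb.le
    have hIic : {x : ℝ | x ≤ m - y * σ} = Set.Iic (m - y * σ) := rfl
    constructor
    · rw [hIic, hset]
      refine le_antisymm ?_ (measure_mono Set.subset_union_left)
      calc betaMeasure 1 q (Set.Iic (m - y * σ) ∪ {x : ℝ | m + y * σ ≤ x})
          ≤ betaMeasure 1 q (Set.Iic (m - y * σ)) + betaMeasure 1 q {x : ℝ | m + y * σ ≤ x} :=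
            measure_union_le _ _
        _ = betaMeasure 1 q (Set.Iic (m - y * σ)) := by rw [htail, add_zero]
    · rw [hIic, beta1_Iic q hq _ ha ha1]
      apply ENNReal.ofReal_le_ofReal
      apply sub_le_sub_left
      apply Real.rpow_le_rpow (by positivity) _ hq.le
      rw [← hqm]
      nlinarith [mul_pos hy hσpos]
  refine ⟨hpart1, part2, ?_⟩
  by_contra hne
  have hpos : 0 < (⨅ w : {v : ℝ × ℝ // 0 < v.1 ∧ 0 < v.2},
      betaMeasure w.1.1 w.1.2 {x : ℝ |
        y * Real.sqrt (w.1.1 * w.1.2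
            / ((w.1.1 + w.1.2) ^ 2 * (w.1.1 + w.1.2 + 1)))
          ≤ |x - w.1.1 / (w.1.1 + w.1.2)|}) := pos_iff_ne_zero.mpr hne
  have hg : Tendsto (fun q : ℝ => ENNReal.ofReal (1 - (q / (1 + q)) ^ q))
      (nhdsWithin 0 (Set.Ioi 0)) (nhds 0) := by
    have hsub : Tendsto (fun q : ℝ => 1 - (q / (1 + q)) ^ q)
        (nhdsWithin 0 (Set.Ioi 0)) (nhds (1 - 1)) := Tendsto.sub tendsto_const_nhds part2
    rw [sub_self] at hsub
    have := (ENNReal.continuous_ofReal.tendsto 0).comp hsub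
    simpa [Function.comp_def] using this
  obtain ⟨q, hq, ⟨heq, hle⟩, hlt⟩ :=
    (eventually_mem_nhdsWithin.and
      (hpart1.and (hg.eventually_lt_const hpos))).exists
  have hinst : (⨅ w : {v : ℝ × ℝ // 0 < v.1 ∧ 0 < v.2},
      betaMeasure w.1.1 w.1.2 {x : ℝ |
        y * Real.sqrt (w.1.1 * w.1.2
            / ((w.1.1 + w.1.2) ^ 2 * (w.1.1 + w.1.2 + 1)))
          ≤ |x - w.1.1 / (w.1.1 + w.1.2)|})
      ≤ betaMeasure 1 q {x : ℝ |
        y * Real.sqrt (q / ((1 + q) ^ 2 * (2 + q))) ≤ |x - 1 / (1 + q)|} := by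
    have h := iInf_le (fun w : {v : ℝ × ℝ // 0 < v.1 ∧ 0 < v.2} =>
      betaMeasure w.1.1 w.1.2 {x : ℝ |
        y * Real.sqrt (w.1.1 * w.1.2
            / ((w.1.1 + w.1.2) ^ 2 * (w.1.1 + w.1.2 + 1)))
          ≤ |x - w.1.1 / (w.1.1 + w.1.2)|}) ⟨(1, q), one_pos, hq⟩
    have hrw : (1:ℝ) * q / ((1 + q) ^ 2 * (1 + q + 1)) = q / ((1 + q) ^ 2 * (2 + q)) := by
      rw [one_mul]
      ring_nf
    rw [hrw] at h
    exact h
  exact absurd ((hinst.trans_eq heq).trans hle |>.trans_lt hlt) (lt_irrefl _)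
end
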